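/- For g₁ = X₁Y² + (1 − X₁² − X₂²) and g₂ = −X₁Y² + 1 in ℝ[X₁,X₂,Y]: (a) 2 − X₁² − X₂² = g₁ + g₂ belongs to the quadratic module M(g₁,g₂); (b) the set S = {(x₁,x₂,y) : g₁ ≥ 0, g₂ ≥ 0} contains (0,0,y) for every y ∈ ℝ and is thus unbounded; (c) the set S∞ = {(x₁,x₂) : x₁ ≥ 0 and −x₁ ≥ 0} = {(x₁,x₂) : x₁ = 0} is unbounded. -/

import Mathlib

/-- Membership in the quadratic module generated by `g₁, …, g_s`. -/
def QuadMod {R : Type*} [CommRing R] {s : ℕ} (g : Fin s → R) (p : R) : Prop :=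
  ∃ σ₀ : R, ∃ σ : Fin s → R,
    IsSumSq σ₀ ∧ (∀ i, IsSumSq (σ i)) ∧ p = σ₀ + ∑ i, σ i * g i

/-- `g₁ = X₁Y² + (1 - X₁² - X₂²)` in `ℝ[X₁,X₂][Y]`. -/
noncomputable def g1Ex : Polynomial (MvPolynomial (Fin 2) ℝ) :=
  Polynomial.C (MvPolynomial.X 0) * Polynomial.X ^ 2 +
    Polynomial.C (1 - MvPolynomial.X 0 ^ 2 - MvPolynomial.X 1 ^ 2)

/-- `g₂ = -X₁Y² + 1` in `ℝ[X₁,X₂][Y]`. -/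
noncomputable def g2Ex : Polynomial (MvPolynomial (Fin 2) ℝ) :=
  -Polynomial.C (MvPolynomial.X 0 : MvPolynomial (Fin 2) ℝ) * Polynomial.X ^ 2 + 1

lemma eq_a : (Polynomial.C (MvPolynomial.C 2 - MvPolynomial.X 0 ^ 2 - MvPolynomial.X 1 ^ 2) :
    Polynomial (MvPolynomial (Fin 2) ℝ)) = g1Ex + g2Ex := by
  simp only [g1Ex, g2Ex]
  push_cast
  ring_nf
  rw [show (1 : Polynomial (MvPolynomial (Fin 2) ℝ)) = Polynomial.C 1 from rfl,
    ← Polynomial.C_add]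
  congr 1
  rw [show (MvPolynomial.C (2:ℝ) : MvPolynomial (Fin 2) ℝ) = 1 + 1 by rw [map_ofNat]; norm_num]
  ring

lemma eval_mem (y : ℝ) :
    0 ≤ Polynomial.eval₂ (MvPolynomial.eval (0 : Fin 2 → ℝ)) y g1Ex ∧
    0 ≤ Polynomial.eval₂ (MvPolynomial.eval (0 : Fin 2 → ℝ)) y g2Ex := by
  simp [g1Ex, g2Ex, Polynomial.eval₂_pow]

theorem stmt_17 :
    -- (a) 2 - X₁² - X₂² = g₁ + g₂ ∈ M(g₁, g₂)
    ((Polynomial.C (MvPolynomial.C 2 - MvPolynomial.X 0 ^ 2 - MvPolynomial.X 1 ^ 2) :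
        Polynomial (MvPolynomial (Fin 2) ℝ)) = g1Ex + g2Ex ∧
      QuadMod ![g1Ex, g2Ex]
        (Polynomial.C (MvPolynomial.C 2 - MvPolynomial.X 0 ^ 2 - MvPolynomial.X 1 ^ 2))) ∧
    -- (b) (0,0,y) ∈ S for all y, and S is unbounded
    ((∀ y : ℝ, ((0 : Fin 2 → ℝ), y) ∈
        {p : (Fin 2 → ℝ) × ℝ |
          0 ≤ Polynomial.eval₂ (MvPolynomial.eval p.1) p.2 g1Ex ∧
          0 ≤ Polynomial.eval₂ (MvPolynomial.eval p.1) p.2 g2Ex}) ∧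
      ¬ Bornology.IsBounded
        {p : (Fin 2 → ℝ) × ℝ |
          0 ≤ Polynomial.eval₂ (MvPolynomial.eval p.1) p.2 g1Ex ∧
          0 ≤ Polynomial.eval₂ (MvPolynomial.eval p.1) p.2 g2Ex}) ∧
    -- (c) S∞ = {x : x₁ = 0} is unbounded
    ({x : Fin 2 → ℝ | 0 ≤ x 0 ∧ 0 ≤ -x 0} = {x : Fin 2 → ℝ | x 0 = 0} ∧
      ¬ Bornology.IsBounded {x : Fin 2 → ℝ | 0 ≤ x 0 ∧ 0 ≤ -x 0}) := by
  refine ⟨⟨eq_a, ?_⟩, ⟨fun y => eval_mem y, ?_⟩, ?_, ?_⟩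
  · refine ⟨0, ![1, 1], IsSumSq.zero, ?_, ?_⟩
    · intro i; fin_cases i <;> simp <;>
        (rw [show (1 : Polynomial (MvPolynomial (Fin 2) ℝ)) = 1 * 1 + 0 by ring];
         exact IsSumSq.sq_add 1 0 IsSumSq.zero)
    · rw [eq_a]; simp [Fin.sum_univ_two]
  · intro hb
    obtain ⟨C, hC⟩ := (isBounded_iff_forall_norm_le).mp hb
    have h := hC ((0 : Fin 2 → ℝ), |C| + 1) (eval_mem _)
    have h2 := le_trans (norm_snd_le ((0 : Fin 2 → ℝ), |C| + 1)) h
    simp at h2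
    have h3 := le_abs_self (|C| + 1)
    have h4 := le_abs_self C
    linarith [abs_nonneg C]
  · ext x; simp; constructor
    · rintro ⟨h1, h2⟩; linarith
    · intro h; constructor <;> simp [h]
  · intro hb
    obtain ⟨C, hC⟩ := (isBounded_iff_forall_norm_le).mp hb
    have h := hC ![0, |C| + 1] (by constructor <;> simp)
    have h2 := le_trans (norm_le_pi_norm ![(0:ℝ), |C| + 1] 1) h
    simp at h2
    have h3 := le_abs_self (|C| + 1)
    have h4 := le_abs_self C
    linarith [abs_nonneg C]
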